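/- Let γ > 1, let g and Q > 0 be real numbers, let y₀ ∈ ℝ, and let p, t : ℝ → ℝ be differentiable at y₀ with p(y₀) > 0 and t(y₀) > 0. Set ρ₀ := γ·p(y₀)/(t(y₀)·Q²), define p⁺(y) := (2γ/(γ+1))·p(y)/t(y) − ((γ−1)/(γ+1))·p(y), and set ρ⁺₀ := (γ+1)·ρ₀/(γ−1+2t(y₀)). Assume p'(y₀) = −ρ₀·g. Then the following are equivalent: (i) p⁺ is differentiable at y₀ with (p⁺)'(y₀) = −ρ⁺₀·g; (ii) t'(y₀) = −(g/Q²)·((γ−1)/4)·(1 − γ − 2t(y₀) + (γ+1)²/(γ−1+2t(y₀))). -/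

import Mathlib

open Real Set

/-- Equivalence of the downstream hydrostatic equation and the Mach-number ODE:
with `ρ₀ = γp(y₀)/(t(y₀)Q²)`, `p⁺ = (2γ/(γ+1))p/t − ((γ−1)/(γ+1))p`,
`ρ⁺₀ = (γ+1)ρ₀/(γ−1+2t(y₀))`, and assuming `p'(y₀) = −ρ₀g`, we have:
`p⁺` is differentiable at `y₀` with `(p⁺)'(y₀) = −ρ⁺₀g` iff
`t'(y₀) = −(g/Q²)·((γ−1)/4)·(1 − γ − 2t(y₀) + (γ+1)²/(γ−1+2t(y₀)))`. -/
theorem downstream_hydrostatic_iff_mach_ode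
    (γ g Q y₀ : ℝ) (p t : ℝ → ℝ) (hγ : 1 < γ) (hQ : 0 < Q)
    (hpd : DifferentiableAt ℝ p y₀) (htd : DifferentiableAt ℝ t y₀)
    (hp0 : 0 < p y₀) (ht0 : 0 < t y₀)
    (hp' : deriv p y₀ = -(γ * p y₀ / (t y₀ * Q ^ 2)) * g) :
    HasDerivAt (fun y => 2 * γ / (γ + 1) * p y / t y - (γ - 1) / (γ + 1) * p y)
        (-((γ + 1) * (γ * p y₀ / (t y₀ * Q ^ 2)) / (γ - 1 + 2 * t y₀)) * g) y₀
      ↔ deriv t y₀ =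
          -(g / Q ^ 2) * ((γ - 1) / 4) *
            (1 - γ - 2 * t y₀ + (γ + 1) ^ 2 / (γ - 1 + 2 * t y₀)) := by
  have ht0' : t y₀ ≠ 0 := ne_of_gt ht0
  have hs : (0:ℝ) < γ - 1 + 2 * t y₀ := by linarith
  have hs' : γ - 1 + 2 * t y₀ ≠ 0 := ne_of_gt hs
  have hγ1 : γ + 1 ≠ 0 := by linarith
  have hQ' : Q ≠ 0 := ne_of_gt hQ
  have hD : HasDerivAt (fun y => 2 * γ / (γ + 1) * p y / t y - (γ - 1) / (γ + 1) * p y)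
      ((2 * γ / (γ + 1) * deriv p y₀ * t y₀ - 2 * γ / (γ + 1) * p y₀ * deriv t y₀) / t y₀ ^ 2
        - (γ - 1) / (γ + 1) * deriv p y₀) y₀ :=
    ((hpd.hasDerivAt.const_mul (2 * γ / (γ + 1))).div htd.hasDerivAt ht0').sub
      (hpd.hasDerivAt.const_mul ((γ - 1) / (γ + 1)))
  constructor
  · intro h
    have heq := h.unique hD
    rw [hp'] at heq
    have hc : γ * p y₀ * (γ + 1) ^ 2 * t y₀ ^ 3 * Q ^ 4 ≠ 0 := by positivity
    have hs2 : γ - 1 + t y₀ * 2 ≠ 0 := by linarith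
    field_simp at heq ⊢
    linear_combination 2 * heq
  · intro h
    have hs2 : γ - 1 + t y₀ * 2 ≠ 0 := by linarith
    convert hD using 1
    rw [hp', h]
    field_simp
    ring
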